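/- With f = AA*, g = A e₃ A* as above and the exterior product on tangent spaces defined by X × Y = (i/2)(X p⁻¹ Y - Y p⁻¹ X) at base point p, it holds that f' × f_z̄ = (i/2)λ · A e₃ A* and g' × g_z̄ = -(i/2)λ · AA*, where λ = αᾱ - ββ̄ = |α|² - |β|². -/

import Mathlib

open Matrix Complex ComplexConjugate

def e3 : Matrix (Fin 2) (Fin 2) ℂ := !![1, 0; 0, -1]

noncomputable def cross (p X Y : Matrix (Fin 2) (Fin 2) ℂ) :
    Matrix (Fin 2) (Fin 2) ℂ :=
  (Complex.I / 2) • (X * p⁻¹ * Y - Y * p⁻¹ * X)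

lemma e3_inv : e3⁻¹ = e3 := by
  apply Matrix.inv_eq_right_inv
  norm_num [Matrix.mul_fin_two, e3, ← Matrix.one_fin_two]

lemma conj_cancel (A : Matrix (Fin 2) (Fin 2) ℂ) (hA : IsUnit A.det)
    (B M N : Matrix (Fin 2) (Fin 2) ℂ) :
    (A * M * Aᴴ) * (A * B * Aᴴ)⁻¹ * (A * N * Aᴴ) = A * (M * B⁻¹ * N) * Aᴴ := by
  have hAH : IsUnit Aᴴ.det := by simpa [Matrix.det_conjTranspose] using hA.map (starRingEnd ℂ)
  rw [Matrix.mul_inv_rev, Matrix.mul_inv_rev]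
  simp only [Matrix.mul_assoc]
  rw [Matrix.mul_nonsing_inv_cancel_left _ _ hAH, Matrix.nonsing_inv_mul_cancel_left _ _ hA]

/-- With `f = AAᴴ`, `g = Ae₃Aᴴ`, `f' = ADAᴴ`, `f_z̄ = ADᴴAᴴ`, `g' = ADe₃Aᴴ`,
`g_z̄ = Ae₃DᴴAᴴ` (`D = [[0,α],[β,0]]`, `det A = 1`), one has
`f' × f_z̄ = (i/2)λ·Ae₃Aᴴ` and `g' × g_z̄ = -(i/2)λ·AAᴴ`, where `λ = |α|²-|β|²`. -/
theorem cross_first_derivatives (A : Matrix (Fin 2) (Fin 2) ℂ) (hA : A.det = 1)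
    (α β : ℂ) :
    cross (A * Aᴴ) (A * !![0, α; β, 0] * Aᴴ) (A * (!![0, α; β, 0])ᴴ * Aᴴ)
        = ((Complex.I / 2) * (α * conj α - β * conj β)) • (A * e3 * Aᴴ) ∧
    cross (A * e3 * Aᴴ) (A * !![0, α; β, 0] * e3 * Aᴴ)
        (A * e3 * (!![0, α; β, 0])ᴴ * Aᴴ)
        = (-(Complex.I / 2) * (α * conj α - β * conj β)) • (A * Aᴴ) := by
  have hAu : IsUnit A.det := by simp [hA]
  have key1 := conj_cancel A hAu 1
  have key2 := conj_cancel A hAu e3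
  have hD : (!![0, α; β, 0])ᴴ = !![0, conj β; conj α, 0] := by
    ext i j; fin_cases i <;> fin_cases j <;> simp
  constructor
  · rw [cross]
    have e1 : A * Aᴴ = A * 1 * Aᴴ := by rw [Matrix.mul_one]
    rw [e1, key1, key1]
    have mid : !![0, α; β, 0] * (1:Matrix (Fin 2) (Fin 2) ℂ)⁻¹ * (!![0, α; β, 0])ᴴ
        - (!![0, α; β, 0])ᴴ * (1:Matrix (Fin 2) (Fin 2) ℂ)⁻¹ * !![0, α; β, 0]
        = (α * conj α - β * conj β) • e3 := by
      rw [hD]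
      norm_num [Matrix.mul_fin_two, e3, Matrix.smul_of]
      refine ⟨⟨mul_comm _ _, ?_⟩, ⟨mul_comm _ _, ?_⟩, ?_⟩ <;> ext i <;> fin_cases i <;> simp
    rw [← Matrix.sub_mul, ← Matrix.mul_sub, mid]
    rw [Matrix.mul_smul, Matrix.smul_mul, smul_smul]
  · rw [cross]
    have h2 : A * !![0, α; β, 0] * e3 * Aᴴ = A * (!![0, α; β, 0] * e3) * Aᴴ := by
      simp [Matrix.mul_assoc]
    have h3 : A * e3 * (!![0, α; β, 0])ᴴ * Aᴴ = A * (e3 * (!![0, α; β, 0])ᴴ) * Aᴴ := by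
      simp [Matrix.mul_assoc]
    rw [h2, h3, key2, key2]
    have mid : !![0, α; β, 0] * e3 * e3⁻¹ * (e3 * (!![0, α; β, 0])ᴴ)
        - e3 * (!![0, α; β, 0])ᴴ * e3⁻¹ * (!![0, α; β, 0] * e3)
        = (-(α * conj α - β * conj β)) • (1 : Matrix (Fin 2) (Fin 2) ℂ) := by
      rw [e3_inv, hD]
      norm_num [Matrix.mul_fin_two, e3, Matrix.smul_of, Matrix.one_fin_two]
      ext i j; fin_cases i <;> fin_cases j <;> simp <;> ring
    rw [← Matrix.sub_mul, ← Matrix.mul_sub, mid]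
    rw [Matrix.mul_smul, Matrix.smul_mul, smul_smul, Matrix.mul_one]
    ring_nf
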